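/- Let $0 < C_1 \le C_2$, and let $A : \mathbb{R} \times \mathbb{R} \to [0, \infty)$ be piecewise constant in $x$ with finitely many discontinuities $x_1 < \cdots < x_m$, with $A(x, \cdot) \in C^2(\mathbb{R})$, $C_1 \le \partial_{uu} A(x, u) \le C_2$, and $\min_u A(x, u) = A(x, u_M(x)) = 0$. Let $u : \mathbb{R} \to \mathbb{R}$ be bounded, and suppose there is a map $y : \mathbb{R} \to \mathbb{R}$ and an initial datum $u_0$ such that $A(x, u(x)) = A(y(x), u_0(y(x)))$ for all $x$, with $u(x)$ and $u_0(y(x))$ on corresponding monotone branches. Then for $z_1, z_2$ in a common constancy interval of $A(\cdot, u)$ whose preimages $y(z_1), y(z_2)$ lie in different constancy intervals, one has $|u(z_1) - u(z_2)| \le (C_2/C_1)^{3/2}\left[|u_0(y(z_1)) - u_M(y(z_1))| + |u_0(y(z_2)) - u_M(y(z_2))|\right] + |u_M(z_1) - u_M(z_2)|$. -/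

import Mathlib

-- a function with monotone derivative vanishing at m has a global min at m
lemma min_at_aux (g g' : ℝ → ℝ) (m : ℝ) (hg : ∀ t, HasDerivAt g (g' t) t)
    (hmono : Monotone g') (h0 : g' m = 0) : ∀ v, g m ≤ g v := by
  intro v
  have hdiff : Differentiable ℝ g := fun t => (hg t).differentiableAt
  have hderiv : ∀ t, deriv g t = g' t := fun t => (hg t).deriv
  rcases le_or_gt m v with h | h
  · have hmon : MonotoneOn g (Set.Ici m) := by
      apply monotoneOn_of_deriv_nonneg (convex_Ici m) hdiff.continuous.continuousOn
        (hdiff.differentiableOn)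
      intro x hx
      rw [interior_Ici] at hx
      rw [hderiv]
      calc (0:ℝ) = g' m := h0.symm
        _ ≤ g' x := hmono (le_of_lt hx)
    exact hmon (Set.self_mem_Ici) h h
  · have hant : AntitoneOn g (Set.Iic m) := by
      apply antitoneOn_of_deriv_nonpos (convex_Iic m) hdiff.continuous.continuousOn
        (hdiff.differentiableOn)
      intro x hx
      rw [interior_Iic] at hx
      rw [hderiv]
      calc g' x ≤ g' m := hmono (le_of_lt hx)
        _ = 0 := h0
    exact hant (le_of_lt h) (Set.self_mem_Iic) (le_of_lt h)

lemma taylor_aux (f : ℝ → ℝ) (m C1 C2 : ℝ) (hC1 : 0 < C1)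
    (hf : ContDiff ℝ 2 f) (hf'' : ∀ w, deriv (deriv f) w ∈ Set.Icc C1 C2)
    (hmin : f m = 0) (hpos : ∀ w, 0 ≤ f w) (v : ℝ) :
    C1 / 2 * (v - m) ^ 2 ≤ f v ∧ f v ≤ C2 / 2 * (v - m) ^ 2 := by
  rw [show (2 : WithTop ℕ∞) = 1 + 1 from rfl, contDiff_succ_iff_deriv] at hf
  obtain ⟨hdf, -, hdf1⟩ := hf
  rw [show (1 : WithTop ℕ∞) = 0 + 1 from rfl, contDiff_succ_iff_deriv] at hdf1
  obtain ⟨hdf', -, -⟩ := hdf1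
  -- f' m = 0
  have hloc : IsLocalMin f m :=
    Filter.Eventually.of_forall (fun w => by rw [hmin]; exact hpos w)
  have hf'm : deriv f m = 0 := hloc.deriv_eq_zero
  -- derivative of quadratic
  have hq : ∀ (c t : ℝ), HasDerivAt (fun s => c * (s - m) ^ 2) (c * (2 * (t - m))) t := by
    intro c t
    have h := ((hasDerivAt_id t).sub_const m).fun_pow 2
    have h2 := h.const_mul c
    refine h2.congr_deriv ?_
    simp only [id_eq]
    ring
  constructor
  · -- lower bound: g t = f t - C1/2 (t-m)^2 has min at m
    set g := fun t => f t - C1 / 2 * (t - m) ^ 2 with hgdef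
    set g' := fun t => deriv f t - C1 * (t - m) with hg'def
    have hg : ∀ t, HasDerivAt g (g' t) t := by
      intro t
      have := ((hdf t).hasDerivAt).sub (hq (C1 / 2) t)
      refine this.congr_deriv ?_
      simp [hg'def]; ring
    have hg' : ∀ t, HasDerivAt g' (deriv (deriv f) t - C1) t := by
      intro t
      have hlin : HasDerivAt (fun s => C1 * (s - m)) C1 t := by
        simpa using ((hasDerivAt_id t).sub_const m).const_mul C1
      exact ((hdf' t).hasDerivAt).sub hlin
    have hmono : Monotone g' := by
      apply monotone_of_deriv_nonneg (fun t => (hg' t).differentiableAt)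
      intro t
      rw [(hg' t).deriv]
      have := (hf'' t).1
      linarith
    have h0 : g' m = 0 := by simp [hg'def, hf'm]
    have := min_at_aux g g' m hg hmono h0 v
    simp only [hgdef, hmin] at this
    linarith [this]
  · -- upper bound: h t = C2/2 (t-m)^2 - f t has min at m
    set g := fun t => C2 / 2 * (t - m) ^ 2 - f t with hgdef
    set g' := fun t => C2 * (t - m) - deriv f t with hg'def
    have hg : ∀ t, HasDerivAt g (g' t) t := by
      intro t
      have := (hq (C2 / 2) t).sub (hdf t).hasDerivAt
      refine this.congr_deriv ?_
      simp [hg'def]; ring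
    have hg' : ∀ t, HasDerivAt g' (C2 - deriv (deriv f) t) t := by
      intro t
      have hlin : HasDerivAt (fun s => C2 * (s - m)) C2 t := by
        simpa using ((hasDerivAt_id t).sub_const m).const_mul C2
      exact hlin.sub (hdf' t).hasDerivAt
    have hmono : Monotone g' := by
      apply monotone_of_deriv_nonneg (fun t => (hg' t).differentiableAt)
      intro t
      rw [(hg' t).deriv]
      have := (hf'' t).2
      linarith
    have h0 : g' m = 0 := by simp [hg'def, hf'm]
    have := min_at_aux g g' m hg hmono h0 v
    simp only [hgdef, hmin] at this
    linarith [this]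

theorem stmt18 (A : ℝ → ℝ → ℝ) (uM u u0 y : ℝ → ℝ) (C1 C2 z1 z2 : ℝ)
    (hC1 : 0 < C1) (hC12 : C1 ≤ C2)
    (hA : ∀ x : ℝ, ContDiff ℝ 2 (A x))
    (hA'' : ∀ x w : ℝ, deriv (deriv (A x)) w ∈ Set.Icc C1 C2)
    (hAmin : ∀ x, A x (uM x) = 0) (hA0 : ∀ x w : ℝ, 0 ≤ A x w)
    (hflux1 : A z1 (u z1) = A (y z1) (u0 (y z1)))
    (hflux2 : A z2 (u z2) = A (y z2) (u0 (y z2)))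
    (hbr1 : Real.sign (u z1 - uM z1) = Real.sign (u0 (y z1) - uM (y z1)))
    (hbr2 : Real.sign (u z2 - uM z2) = Real.sign (u0 (y z2) - uM (y z2)))
    (hsame : ∀ w : ℝ, A z1 w = A z2 w)
    (hdiff : ¬ ∀ w : ℝ, A (y z1) w = A (y z2) w) :
    |u z1 - u z2| ≤
      (C2 / C1) ^ ((3 : ℝ) / 2) *
        (|u0 (y z1) - uM (y z1)| + |u0 (y z2) - uM (y z2)|) + |uM z1 - uM z2| := by
  have hratio : (1 : ℝ) ≤ C2 / C1 := (one_le_div hC1).mpr hC12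
  set K := (C2 / C1) ^ ((3 : ℝ) / 2) with hK
  have hsqrtK : Real.sqrt (C2 / C1) ≤ K := by
    rw [Real.sqrt_eq_rpow]
    exact Real.rpow_le_rpow_of_exponent_le hratio (by norm_num)
  -- key estimate for each point
  have key : ∀ x : ℝ, |u x - uM x| ≤ Real.sqrt (C2 / C1) * |u0 (y x) - uM (y x)| →
      True := fun _ _ => trivial
  have bound : ∀ x : ℝ, A x (u x) = A (y x) (u0 (y x)) →
      |u x - uM x| ≤ Real.sqrt (C2 / C1) * |u0 (y x) - uM (y x)| := by
    intro x hfl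
    have h1 := taylor_aux (A x) (uM x) C1 C2 hC1 (hA x) (hA'' x) (hAmin x) (hA0 x) (u x)
    have h2 := taylor_aux (A (y x)) (uM (y x)) C1 C2 hC1 (hA (y x)) (hA'' (y x))
      (hAmin (y x)) (hA0 (y x)) (u0 (y x))
    have hsq : (u x - uM x) ^ 2 ≤ (C2 / C1) * (u0 (y x) - uM (y x)) ^ 2 := by
      have := h1.1
      have := h2.2
      rw [div_mul_eq_mul_div, le_div_iff₀ hC1]
      nlinarith [h1.1, h2.2, hfl]
    calc |u x - uM x| = Real.sqrt ((u x - uM x) ^ 2) := (Real.sqrt_sq_eq_abs _).symm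
      _ ≤ Real.sqrt ((C2 / C1) * (u0 (y x) - uM (y x)) ^ 2) := Real.sqrt_le_sqrt hsq
      _ = Real.sqrt (C2 / C1) * |u0 (y x) - uM (y x)| := by
          rw [Real.sqrt_mul (by positivity), Real.sqrt_sq_eq_abs]
  have b1 := bound z1 hflux1
  have b2 := bound z2 hflux2
  have hb1K : Real.sqrt (C2 / C1) * |u0 (y z1) - uM (y z1)| ≤ K * |u0 (y z1) - uM (y z1)| :=
    mul_le_mul_of_nonneg_right hsqrtK (abs_nonneg _)
  have hb2K : Real.sqrt (C2 / C1) * |u0 (y z2) - uM (y z2)| ≤ K * |u0 (y z2) - uM (y z2)| :=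
    mul_le_mul_of_nonneg_right hsqrtK (abs_nonneg _)
  have htri : |u z1 - u z2| ≤ |u z1 - uM z1| + |u z2 - uM z2| + |uM z1 - uM z2| := by
    have : u z1 - u z2 = (u z1 - uM z1) - (u z2 - uM z2) + (uM z1 - uM z2) := by ring
    rw [this]
    calc |(u z1 - uM z1) - (u z2 - uM z2) + (uM z1 - uM z2)|
        ≤ |(u z1 - uM z1) - (u z2 - uM z2)| + |uM z1 - uM z2| := abs_add_le _ _
      _ ≤ (|u z1 - uM z1| + |u z2 - uM z2|) + |uM z1 - uM z2| := by
          exact add_le_add_left (abs_sub _ _) _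
  have : K * (|u0 (y z1) - uM (y z1)| + |u0 (y z2) - uM (y z2)|)
      = K * |u0 (y z1) - uM (y z1)| + K * |u0 (y z2) - uM (y z2)| := by ring
  linarith
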